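/- Let X be a real Banach space and let (xₙ) be a bounded sequence in X, and let x ∈ X. If for every extreme point f of the closed unit ball of the dual space X* the sequence (f(xₙ)) converges to f(x), then (xₙ) converges weakly to x. -/

import Mathlib

open Set Filter Metric Topology

section RainwaterAux

variable {X : Type*} [NormedAddCommGroup X] [NormedSpace ℝ X]

/-- An infinite convex combination with geometric weights `2⁻¹ ^ (n+1)` of elements of a
closed convex set stays in the set. -/
lemma tsum_geom_smul_mem {K : Set X} (hconv : Convex ℝ K) (hcl : IsClosed K)
    {a : ℕ → X} (ha : ∀ n, a n ∈ K)
    (hsum : Summable fun n => (2:ℝ)⁻¹ ^ (n+1) • a n) :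
    (∑' n, (2:ℝ)⁻¹ ^ (n+1) • a n) ∈ K := by
  set f : ℕ → X := fun n => (2:ℝ)⁻¹ ^ (n+1) • a n with hf
  have htend : Tendsto (fun m => ∑ k ∈ Finset.range m, f k) atTop (𝓝 (∑' n, f n)) :=
    hsum.hasSum.tendsto_sum_nat
  have hmass : ∀ m, ∑ k ∈ Finset.range m, (2:ℝ)⁻¹ ^ (k+1) = 1 - (2:ℝ)⁻¹ ^ m := by
    intro m
    induction m with
    | zero => simp
    | succ m ih => rw [Finset.sum_range_succ, ih]; ring
  have hμpos : ∀ m : ℕ, m ≠ 0 → (0:ℝ) < 1 - (2:ℝ)⁻¹ ^ m := by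
    intro m hm
    have : (2:ℝ)⁻¹ ^ m < 1 := pow_lt_one₀ (by norm_num) (by norm_num) hm
    linarith
  have hμtend : Tendsto (fun m : ℕ => (1 - (2:ℝ)⁻¹ ^ m)⁻¹) atTop (𝓝 1) := by
    have h1 : Tendsto (fun m : ℕ => 1 - (2:ℝ)⁻¹ ^ m) atTop (𝓝 1) := by
      have := tendsto_pow_atTop_nhds_zero_of_lt_one (show (0:ℝ) ≤ 2⁻¹ by norm_num)
        (show (2:ℝ)⁻¹ < 1 by norm_num)
      simpa using (tendsto_const_nhds (x := (1:ℝ))).sub this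
    simpa using h1.inv₀ (by norm_num)
  have hqmem : ∀ m : ℕ, m ≠ 0 →
      (1 - (2:ℝ)⁻¹ ^ m)⁻¹ • ∑ k ∈ Finset.range m, f k ∈ K := by
    intro m hm
    rw [Finset.smul_sum]
    have := hconv.sum_mem (t := Finset.range m)
      (w := fun k => (1 - (2:ℝ)⁻¹ ^ m)⁻¹ * (2:ℝ)⁻¹ ^ (k+1)) (z := a)
      (fun k _ => mul_nonneg (inv_nonneg.2 (hμpos m hm).le) (by positivity))
      (by rw [← Finset.mul_sum, hmass, inv_mul_cancel₀ (hμpos m hm).ne'])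
      (fun k _ => ha k)
    simpa [hf, smul_smul] using this
  have hqtend : Tendsto (fun m => (1 - (2:ℝ)⁻¹ ^ m)⁻¹ • ∑ k ∈ Finset.range m, f k)
      atTop (𝓝 (∑' n, f n)) := by
    have := hμtend.smul htend
    simpa using this
  exact hcl.mem_of_tendsto hqtend ((eventually_ne_atTop 0).mono fun m hm => hqmem m hm)

/-- Bauer-type fact via Krein–Milman: any vector's norm is achieved (as `≤`) at some
extreme point of the closed dual unit ball. -/
lemma exists_extreme_dual_ge (h : X) :
    ∃ b : X →L[ℝ] ℝ, b ∈ Set.extremePoints ℝ {g : X →L[ℝ] ℝ | ‖g‖ ≤ 1} ∧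
      ‖b‖ ≤ 1 ∧ ‖h‖ ≤ b h := by
  haveI : LocallyConvexSpace ℝ (WeakDual ℝ X) := WeakBilin.locallyConvexSpace
  set K : Set (WeakDual ℝ X) := WeakDual.toStrongDual ⁻¹' closedBall (0 : StrongDual ℝ X) 1 with hKdef
  have hKc : IsCompact K := WeakDual.isCompact_closedBall 0 1
  have hKmem : ∀ f : WeakDual ℝ X, f ∈ K ↔ ‖WeakDual.toStrongDual f‖ ≤ 1 := by
    intro f; simp [hKdef]
  have hKne : K.Nonempty := ⟨0, by simp [hKdef]⟩
  set l : WeakDual ℝ X →L[ℝ] ℝ :=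
    { toFun := fun f => f h
      map_add' := fun _ _ => rfl
      map_smul' := fun _ _ => rfl
      cont := WeakBilin.eval_continuous _ h } with hldef
  obtain ⟨f₀, hf₀K, hf₀max⟩ := hKc.exists_isMaxOn hKne l.continuous.continuousOn
  set F : Set (WeakDual ℝ X) := {f ∈ K | ∀ w ∈ K, l w ≤ l f} with hFdef
  have hFexp : IsExposed ℝ K F := fun _ => ⟨l, rfl⟩
  have hFne : F.Nonempty := ⟨f₀, hf₀K, fun w hw => hf₀max hw⟩
  have hFcl : IsClosed F := by
    have : F = K ∩ ⋂ w ∈ K, {f | l w ≤ l f} := by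
      ext f
      simp only [hFdef, Set.mem_setOf_eq, Set.mem_inter_iff, Set.mem_iInter]
    rw [this]
    exact hKc.isClosed.inter
      (isClosed_biInter fun w _ => isClosed_le continuous_const l.continuous)
  have hFcomp : IsCompact F := hKc.of_isClosed_subset hFcl (Set.sep_subset _ _)
  obtain ⟨b, hbF⟩ := hFcomp.extremePoints_nonempty hFne
  have hbK : b ∈ Set.extremePoints ℝ K :=
    hFexp.isExtreme.extremePoints_subset_extremePoints hbF
  have hbFmem : b ∈ F := extremePoints_subset hbF
  have hbnorm : ‖WeakDual.toStrongDual b‖ ≤ 1 := (hKmem b).1 hbFmem.1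
  -- the norming functional
  obtain ⟨g₀, hg₀n, hg₀h⟩ := exists_dual_vector'' ℝ h
  have hg₀K : StrongDual.toWeakDual g₀ ∈ K := by
    rw [hKmem]; simpa using hg₀n
  have hval : ‖h‖ ≤ WeakDual.toStrongDual b h := by
    have := hbFmem.2 _ hg₀K
    have hl : l (StrongDual.toWeakDual g₀) = ‖h‖ := hg₀h
    rw [hl] at this
    exact this
  refine ⟨WeakDual.toStrongDual b, ?_, hbnorm, hval⟩
  rw [mem_extremePoints]
  refine ⟨hbnorm, ?_⟩
  intro x₁ hx₁ x₂ hx₂ hseg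
  have h₁K : StrongDual.toWeakDual x₁ ∈ K := by rw [hKmem]; simpa using hx₁
  have h₂K : StrongDual.toWeakDual x₂ ∈ K := by rw [hKmem]; simpa using hx₂
  have := (mem_extremePoints.mp hbK).2 _ h₁K _ h₂K hseg
  exact ⟨congrArg WeakDual.toStrongDual this.1, congrArg WeakDual.toStrongDual this.2⟩

lemma rainwater_limsup [CompleteSpace X] {y : ℕ → X} {M : ℝ} (hbd : ∀ n, ‖y n‖ ≤ M)
    (hy : ∀ b : X →L[ℝ] ℝ, b ∈ Set.extremePoints ℝ {g : X →L[ℝ] ℝ | ‖g‖ ≤ 1} →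
      Tendsto (fun n => b (y n)) atTop (𝓝 0))
    (g : X →L[ℝ] ℝ) (hg : ‖g‖ ≤ 1) :
    limsup (fun n => g (y n)) atTop ≤ 0 := by
  by_contra hcon
  push_neg at hcon
  set L := limsup (fun n => g (y n)) atTop with hLdef
  have hgyb : ∀ n, |g (y n)| ≤ M := fun n => by
    calc |g (y n)| ≤ ‖g‖ * ‖y n‖ := g.le_opNorm _
    _ ≤ 1 * M := mul_le_mul hg (hbd n) (norm_nonneg _) zero_le_one
    _ = M := one_mul _
  have hcob : IsCoboundedUnder (· ≤ ·) atTop (fun n => g (y n)) :=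
    IsBoundedUnder.isCoboundedUnder_le
      ⟨-M, eventually_map.2 (Eventually.of_forall fun n => neg_le_of_abs_le (hgyb n))⟩
  have hfreq : ∃ᶠ n in atTop, L - L/4 < g (y n) :=
    frequently_lt_of_lt_limsup hcob (by rw [← hLdef]; linarith)
  obtain ⟨φ, hφmono, hφ⟩ := extraction_of_frequently_atTop hfreq
  set ε := L/4 with hεdef
  have hε : 0 < ε := by positivity
  set z : ℕ → X := fun k => y (φ k) with hzdef
  set W : ℕ → Set X := fun n => closure (convexHull ℝ (z '' Ici n)) with hWdef
  have hWconv : ∀ n, Convex ℝ (W n) := fun n => (convex_convexHull ℝ _).closure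
  have hWcl : ∀ n, IsClosed (W n) := fun n => isClosed_closure
  have hWz : ∀ {n k : ℕ}, n ≤ k → z k ∈ W n := fun {n k} hnk =>
    subset_closure (subset_convexHull ℝ _ ⟨k, hnk, rfl⟩)
  have hWmono : ∀ {n m : ℕ}, n ≤ m → W m ⊆ W n := fun {n m} hnm =>
    closure_mono (convexHull_mono (image_mono (Ici_subset_Ici.2 hnm)))
  have hWne : ∀ n, (W n).Nonempty := fun n => ⟨z n, hWz le_rfl⟩
  have hWhalfle : ∀ (n : ℕ) (b : X →L[ℝ] ℝ) (c : ℝ), (∀ k, n ≤ k → b (z k) ≤ c) →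
      ∀ w ∈ W n, b w ≤ c := by
    intro n b c hc w hw
    have hsub : W n ⊆ {x | b x ≤ c} :=
      closure_minimal (convexHull_min (fun x ⟨k, hk, hkx⟩ => hkx ▸ hc k hk)
        (convex_halfSpace_le (LinearMap.isLinear _) c))
        (isClosed_le b.continuous continuous_const)
    exact hsub hw
  have hWg : ∀ (n : ℕ), ∀ w ∈ W n, L - ε ≤ g w := by
    intro n w hw
    have hsub : W n ⊆ {x | L - ε ≤ g x} :=
      closure_minimal (convexHull_min (fun x ⟨k, _, hkx⟩ => hkx ▸ (hφ k).le)
        (convex_halfSpace_ge (LinearMap.isLinear _) (L - ε)))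
        (isClosed_le continuous_const g.continuous)
    exact hsub hw
  have hWnorm : ∀ (n : ℕ), ∀ w ∈ W n, ‖w‖ ≤ M := by
    intro n w hw
    have hsub : W n ⊆ closedBall 0 M :=
      closure_minimal (convexHull_min (fun x ⟨k, _, hkx⟩ =>
        hkx ▸ mem_closedBall_zero_iff.2 (hbd _)) (convex_closedBall 0 M))
        Metric.isClosed_closedBall
    exact mem_closedBall_zero_iff.1 (hsub hw)
  have hM0 : 0 ≤ M := le_trans (norm_nonneg _) (hbd 0)
  -- recursive near-optimal choice
  have hpick : ∀ (n : ℕ) (v : X), ∃ w, w ∈ W n ∧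
      ∀ w' ∈ W n, ‖v + (2:ℝ)⁻¹^(n+1) • w‖ ≤ ‖v + (2:ℝ)⁻¹^(n+1) • w'‖ + ε * (4:ℝ)⁻¹^(n+1) := by
    intro n v
    set S := (fun w => ‖v + (2:ℝ)⁻¹^(n+1) • w‖) '' W n with hSdef
    have hSne : S.Nonempty := (hWne n).image _
    have hSbd : BddBelow S := ⟨0, fun s ⟨w, _, hw⟩ => hw ▸ norm_nonneg _⟩
    obtain ⟨a, ⟨w, hwW, rfl⟩, ha⟩ := Real.lt_sInf_add_pos hSne
      (show 0 < ε * (4:ℝ)⁻¹^(n+1) by positivity)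
    refine ⟨w, hwW, fun w' hw' => le_trans ha.le ?_⟩
    have : sInf S ≤ ‖v + (2:ℝ)⁻¹^(n+1) • w'‖ := csInf_le hSbd ⟨w', hw', rfl⟩
    linarith
  choose pick hpickW hpickmin using hpick
  set u : ℕ → X := fun n => Nat.rec 0 (fun k uk => uk + (2:ℝ)⁻¹^(k+1) • pick k uk) n with hudef
  set w : ℕ → X := fun n => pick n (u n) with hwdef
  have hus : ∀ n, u (n+1) = u n + (2:ℝ)⁻¹^(n+1) • w n := fun n => rfl
  have hu0 : u 0 = 0 := rfl
  have hwW : ∀ n, w n ∈ W n := fun n => hpickW n (u n)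
  have hmin : ∀ n, ∀ w' ∈ W n,
      ‖u (n+1)‖ ≤ ‖u n + (2:ℝ)⁻¹^(n+1) • w'‖ + ε * (4:ℝ)⁻¹^(n+1) := by
    intro n w' hw'
    rw [hus n]
    exact hpickmin n (u n) w' hw'
  -- summability
  have hsummany : ∀ n : ℕ, Summable (fun j => (2:ℝ)⁻¹^(j+1) • w (n+j)) := by
    intro n
    apply Summable.of_norm
    refine Summable.of_nonneg_of_le (fun j => norm_nonneg _) (fun j => ?_)
      ((summable_geometric_of_lt_one (by norm_num : (0:ℝ) ≤ 2⁻¹)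
        (by norm_num : (2:ℝ)⁻¹ < 1)).mul_right (2⁻¹ * M))
    · rw [norm_smul, norm_pow]
      have h1 : ‖(2:ℝ)⁻¹‖ = 2⁻¹ := by rw [Real.norm_eq_abs]; norm_num
      rw [h1, pow_succ]
      calc (2:ℝ)⁻¹^j * 2⁻¹ * ‖w (n+j)‖ ≤ (2:ℝ)⁻¹^j * 2⁻¹ * M := by
            have := hWnorm _ _ (hwW (n+j))
            gcongr
        _ = (2:ℝ)⁻¹^j * (2⁻¹ * M) := by ring
  have hsummable : Summable (fun n => (2:ℝ)⁻¹^(n+1) • w n) := by simpa using hsummany 0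
  set h : X := ∑' n, (2:ℝ)⁻¹^(n+1) • w n with hhdef
  have hpartial : ∀ n, u n = ∑ k ∈ Finset.range n, (2:ℝ)⁻¹^(k+1) • w k := by
    intro n
    induction n with
    | zero => simp [hu0]
    | succ n ih => rw [hus n, ih, Finset.sum_range_succ]
  have hhW : h ∈ W 0 := by
    rw [hhdef]
    exact tsum_geom_smul_mem (hWconv 0) (hWcl 0) (fun n => hWmono (Nat.zero_le n) (hwW n))
      hsummable
  set v : ℕ → X := fun n => ∑' j, (2:ℝ)⁻¹^(j+1) • w (n+j) with hvdef
  have hvW : ∀ n, v n ∈ W n := fun n =>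
    tsum_geom_smul_mem (hWconv n) (hWcl n)
      (fun j => hWmono (Nat.le_add_right n j) (hwW (n+j))) (hsummany n)
  have hvid : ∀ n, u n + (2:ℝ)⁻¹^n • v n = h := by
    intro n
    have hsplit := Summable.sum_add_tsum_nat_add (f := fun k => (2:ℝ)⁻¹^(k+1) • w k) n hsummable
    rw [hhdef, ← hsplit, ← hpartial n]
    congr 1
    rw [hvdef, ← Summable.tsum_const_smul _ (hsummany n)]
    congr 1
    funext j
    rw [smul_smul, ← pow_add, show n + (j+1) = (j+n)+1 from by omega,
      show n + j = j + n from by omega]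
  -- key inequality
  have hkey : ∀ n, 2 * ‖u (n+1)‖ ≤ ‖h‖ + ‖u n‖ + 2 * (ε * (4:ℝ)⁻¹^(n+1)) := by
    intro n
    set wb : X := (2:ℝ)⁻¹ • w n + (2:ℝ)⁻¹ • v (n+1) with hwbdef
    have hwbW : wb ∈ W n :=
      (hWconv n) (hwW n) (hWmono (Nat.le_succ n) (hvW (n+1)))
        (by norm_num) (by norm_num) (by norm_num)
    have h1 := hmin n wb hwbW
    have h2 : u n + (2:ℝ)⁻¹^(n+1) • wb = (2:ℝ)⁻¹ • (u n + h) := by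
      rw [← hvid (n+1), hus n, hwbdef]
      module
    rw [h2] at h1
    have h3 : ‖(2:ℝ)⁻¹ • (u n + h)‖ ≤ 2⁻¹ * (‖u n‖ + ‖h‖) := by
      rw [norm_smul, Real.norm_eq_abs]
      have : |(2:ℝ)⁻¹| = 2⁻¹ := by norm_num
      rw [this]
      have := norm_add_le (u n) h
      linarith
    linarith
  -- invariant
  have hinv : ∀ n, (2:ℝ)⁻¹^n * (L - 2*ε) + ε * (4:ℝ)⁻¹^n ≤ ‖h‖ - ‖u n‖ := by
    intro n
    induction n with
    | zero =>
      rw [hu0, norm_zero]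
      have h1 : L - ε ≤ g h := hWg 0 h hhW
      have h2 : g h ≤ ‖h‖ := by
        calc g h ≤ |g h| := le_abs_self _
        _ ≤ ‖g‖ * ‖h‖ := g.le_opNorm _
        _ ≤ 1 * ‖h‖ := mul_le_mul hg le_rfl (norm_nonneg _) zero_le_one
        _ = ‖h‖ := one_mul _
      simp only [pow_zero]
      linarith
    | succ n ih =>
      have hk := hkey n
      have e2 : (2:ℝ)⁻¹^(n+1) = (2:ℝ)⁻¹^n * 2⁻¹ := pow_succ _ _
      have e4 : (4:ℝ)⁻¹^(n+1) = (4:ℝ)⁻¹^n * 4⁻¹ := pow_succ _ _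
      rw [e2, e4]
      rw [e4] at hk
      nlinarith [ih, hk]
  -- extreme point and contradiction
  obtain ⟨b, hbext, hbnorm, hbh⟩ := exists_extreme_dual_ge h
  have hbz : Tendsto (fun k => b (z k)) atTop (𝓝 0) :=
    (hy b hbext).comp hφmono.tendsto_atTop
  have hev : ∀ᶠ k in atTop, b (z k) < L/8 :=
    hbz.eventually_lt_const (by positivity)
  obtain ⟨N, hN⟩ := eventually_atTop.1 hev
  have hupper : b (v N) ≤ L/8 :=
    hWhalfle N b (L/8) (fun k hk => (hN k hk).le) (v N) (hvW N)
  have hbuN : b (u N) ≤ ‖u N‖ := by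
    calc b (u N) ≤ |b (u N)| := le_abs_self _
    _ ≤ ‖b‖ * ‖u N‖ := b.le_opNorm _
    _ ≤ 1 * ‖u N‖ := mul_le_mul hbnorm le_rfl (norm_nonneg _) zero_le_one
    _ = ‖u N‖ := one_mul _
  have hlower : L - 2*ε ≤ b (v N) := by
    have h1 : b h = b (u N) + (2:ℝ)⁻¹^N * b (v N) := by
      conv_lhs => rw [← hvid N]
      rw [map_add, map_smul]
      rfl
    have h2 : (2:ℝ)⁻¹^N * (L - 2*ε) + ε * (4:ℝ)⁻¹^N ≤ ‖h‖ - ‖u N‖ := hinv N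
    have h3 : ‖h‖ - ‖u N‖ ≤ b h - b (u N) := by linarith
    have h4 : (2:ℝ)⁻¹^N * (L - 2*ε) ≤ (2:ℝ)⁻¹^N * b (v N) := by
      have hε4 : 0 ≤ ε * (4:ℝ)⁻¹^N := by positivity
      linarith [h1, h2, h3]
    have hpow : (0:ℝ) < (2:ℝ)⁻¹^N := by positivity
    exact le_of_mul_le_mul_left (by linarith [h4]) hpow
  rw [hεdef] at hlower
  linarith

end RainwaterAux

/-- **Rainwater's Theorem.** Let `X` be a real Banach space, `(xₙ)` a bounded
sequence in `X` and `x₀ ∈ X`. If `f (xₙ) → f x₀` for every extreme point `f`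
of the closed unit ball of the dual space `X →L[ℝ] ℝ`, then `(xₙ)` converges
weakly to `x₀`, i.e. `g (xₙ) → g x₀` for every continuous linear functional `g`. -/
theorem rainwater {X : Type*} [NormedAddCommGroup X] [NormedSpace ℝ X]
    [CompleteSpace X] (x : ℕ → X) (x₀ : X) (M : ℝ) (hbdd : ∀ n, ‖x n‖ ≤ M)
    (hext : ∀ f : X →L[ℝ] ℝ,
      f ∈ Set.extremePoints ℝ {g : X →L[ℝ] ℝ | ‖g‖ ≤ 1} →
      Filter.Tendsto (fun n => f (x n)) Filter.atTop (nhds (f x₀))) :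
    ∀ g : X →L[ℝ] ℝ,
      Filter.Tendsto (fun n => g (x n)) Filter.atTop (nhds (g x₀)) := by
  intro g
  set y : ℕ → X := fun n => x n - x₀ with hydef
  have hbd : ∀ n, ‖y n‖ ≤ M + ‖x₀‖ := fun n =>
    le_trans (norm_sub_le _ _) (add_le_add_left (hbdd n) _)
  have hy : ∀ b : X →L[ℝ] ℝ, b ∈ Set.extremePoints ℝ {g : X →L[ℝ] ℝ | ‖g‖ ≤ 1} →
      Tendsto (fun n => b (y n)) atTop (𝓝 0) := by
    intro b hb
    have := (hext b hb).sub_const (b x₀)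
    simpa [hydef, map_sub] using this
  set C : ℝ := max ‖g‖ 1 with hCdef
  have hC1 : (1:ℝ) ≤ C := le_max_right _ _
  have hC0 : (0:ℝ) < C := lt_of_lt_of_le one_pos hC1
  set g' : X →L[ℝ] ℝ := C⁻¹ • g with hg'def
  have hg'n : ‖g'‖ ≤ 1 := by
    rw [hg'def, norm_smul C⁻¹ g, Real.norm_eq_abs, abs_of_pos (inv_pos.2 hC0)]
    calc C⁻¹ * ‖g‖ ≤ C⁻¹ * C := by
          have : ‖g‖ ≤ C := le_max_left _ _
          gcongr
    _ = 1 := inv_mul_cancel₀ hC0.ne'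
  have hng'n : ‖-g'‖ ≤ 1 := by rw [norm_neg]; exact hg'n
  have hls : limsup (fun n => g' (y n)) atTop ≤ 0 := rainwater_limsup hbd hy g' hg'n
  have hls' : limsup (fun n => (-g') (y n)) atTop ≤ 0 := rainwater_limsup hbd hy (-g') hng'n
  -- boundedness facts
  have habs : ∀ n, |g' (y n)| ≤ M + ‖x₀‖ := fun n => by
    calc |g' (y n)| ≤ ‖g'‖ * ‖y n‖ := g'.le_opNorm _
    _ ≤ 1 * (M + ‖x₀‖) := mul_le_mul hg'n (hbd n) (norm_nonneg _) zero_le_one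
    _ = M + ‖x₀‖ := one_mul _
  have hbdle : IsBoundedUnder (· ≤ ·) atTop (fun n => g' (y n)) :=
    ⟨M + ‖x₀‖, eventually_map.2 (Eventually.of_forall fun n => le_of_abs_le (habs n))⟩
  have hbdge : IsBoundedUnder (· ≥ ·) atTop (fun n => g' (y n)) :=
    ⟨-(M + ‖x₀‖), eventually_map.2 (Eventually.of_forall fun n => neg_le_of_abs_le (habs n))⟩
  have hbdle' : IsBoundedUnder (· ≤ ·) atTop (fun n => (-g') (y n)) :=
    ⟨M + ‖x₀‖, eventually_map.2 (Eventually.of_forall fun n => by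
      simp only [ContinuousLinearMap.neg_apply]
      exact le_of_abs_le (by rw [abs_neg]; exact habs n))⟩
  have hliminf : 0 ≤ liminf (fun n => g' (y n)) atTop := by
    by_contra hcl
    push_neg at hcl
    set d := liminf (fun n => g' (y n)) atTop with hddef
    have hfreq : ∃ᶠ n in atTop, g' (y n) < d/2 :=
      frequently_lt_of_liminf_lt (hbdle.isCoboundedUnder_ge) (by rw [← hddef]; linarith)
    have hfreq' : ∃ᶠ n in atTop, -(d/2) ≤ (-g') (y n) := by
      refine hfreq.mono fun n hn => ?_
      simp only [ContinuousLinearMap.neg_apply]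
      linarith
    have := le_limsup_of_frequently_le hfreq' hbdle'
    linarith
  have htend0 : Tendsto (fun n => g' (y n)) atTop (𝓝 0) :=
    tendsto_of_le_liminf_of_limsup_le hliminf hls hbdle hbdge
  have htend : Tendsto (fun n => C * g' (y n) + g x₀) atTop (𝓝 (g x₀)) := by
    have := (htend0.const_mul C).add_const (g x₀)
    simpa using this
  refine htend.congr fun n => ?_
  rw [hg'def]
  simp only [ContinuousLinearMap.smul_apply, smul_eq_mul, hydef, map_sub]
  field_simp
  ring
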